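/- Let G be a group acting on a tree by isometries, and suppose an end e of the tree is fixed by G. Then the set N of elements of G fixing some vertex of the tree is a normal subgroup of G. -/

import Mathlib

open SimpleGraph

namespace Stmt6Aux

variable {V : Type*} {T : SimpleGraph V}

/-- The walk along the ray from `r a` to `r (a + d)`. -/
def rayWalk (r : ℕ → V) (hray : ∀ n, T.Adj (r n) (r (n + 1))) :
    ∀ (d a : ℕ), T.Walk (r a) (r (a + d))
  | 0, _ => Walk.nil
  | d + 1, a => (rayWalk r hray d a).concat (hray (a + d))

lemma rayWalk_length (r : ℕ → V) (hray : ∀ n, T.Adj (r n) (r (n + 1))) (d a : ℕ) :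
    (rayWalk r hray d a).length = d := by
  induction d with
  | zero => rfl
  | succ d ih => simp [rayWalk, Walk.length_concat, ih]

lemma rayWalk_support (r : ℕ → V) (hray : ∀ n, T.Adj (r n) (r (n + 1))) (d a : ℕ) :
    (rayWalk r hray d a).support = (List.range (d + 1)).map (fun i => r (a + i)) := by
  induction d with
  | zero => simp [rayWalk, List.range_succ]
  | succ d ih =>
    simp only [rayWalk, Walk.concat_eq_append, Walk.support_append, ih, List.range_succ,
      List.map_append]
    simp

lemma rayWalk_isPath (r : ℕ → V) (hray : ∀ n, T.Adj (r n) (r (n + 1)))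
    (hinj : Function.Injective r) (d a : ℕ) : (rayWalk r hray d a).IsPath := by
  rw [Walk.isPath_def, rayWalk_support]
  exact List.Nodup.map (fun i j hij => by have := hinj hij; omega) List.nodup_range

lemma dist_ray (htree : T.IsTree) (r : ℕ → V) (hray : ∀ n, T.Adj (r n) (r (n + 1)))
    (hinj : Function.Injective r) (a d : ℕ) : T.dist (r a) (r (a + d)) = d := by
  classical
  refine le_antisymm (by simpa [rayWalk_length] using SimpleGraph.dist_le (rayWalk r hray d a)) ?_
  obtain ⟨w, hw⟩ :=
    (htree.isConnected.preconnected (r a) (r (a + d))).exists_walk_length_eq_dist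
  have huniq := htree.existsUnique_path (r a) (r (a + d))
  have heq : rayWalk r hray d a = w.bypass :=
    huniq.unique (rayWalk_isPath r hray hinj d a) w.bypass_isPath
  calc d = (rayWalk r hray d a).length := (rayWalk_length r hray d a).symm
    _ = w.bypass.length := by rw [heq]
    _ ≤ w.length := w.length_bypass_le
    _ = T.dist (r a) (r (a + d)) := hw

variable {G : Type*} [Group G] [MulAction G V]

lemma dist_smul_le (htree : T.IsTree) (hact : ∀ (g : G) (u v : V), T.Adj u v → T.Adj (g • u) (g • v))
    (g : G) (u v : V) : T.dist (g • u) (g • v) ≤ T.dist u v := by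
  obtain ⟨w, hw⟩ := (htree.isConnected.preconnected u v).exists_walk_length_eq_dist
  have := SimpleGraph.dist_le (w.map ⟨(g • ·), fun {a b} h => hact g a b h⟩)
  rwa [Walk.length_map, hw] at this

lemma dist_smul (htree : T.IsTree) (hact : ∀ (g : G) (u v : V), T.Adj u v → T.Adj (g • u) (g • v))
    (g : G) (u v : V) : T.dist (g • u) (g • v) = T.dist u v := by
  refine le_antisymm (dist_smul_le htree hact g u v) ?_
  have := dist_smul_le htree hact g⁻¹ (g • u) (g • v)
  simpa using this

/-- If a function `f : ℕ → ℕ` grows at least linearly but is periodic on a tail, contradiction. -/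
lemma no_growth {f : ℕ → ℕ} (D : ℕ) (hlb : ∀ N, N ≤ D + f N) (k m : ℕ) (hlt : k < m)
    (heq : ∀ n, f (n + m) = f (n + k)) : False := by
  obtain ⟨s, hs, rfl⟩ : ∃ s, 0 < s ∧ m = k + s := ⟨m - k, by omega, by omega⟩
  have claim : ∀ j, f (k + j * s) = f k := by
    intro j
    induction j with
    | zero => simp
    | succ j ih =>
      have h1 := heq (j * s)
      have e1 : k + (j + 1) * s = j * s + (k + s) := by ring
      have e2 : j * s + k = k + j * s := by ring
      rw [e1, h1, e2, ih]
  set j := D + f k + 1 with hj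
  have hjs : j ≤ j * s := Nat.le_mul_of_pos_right _ hs
  have := hlb (k + j * s)
  rw [claim j] at this
  omega

end Stmt6Aux

open Stmt6Aux in
/-- Let a group `G` act on a (simplicial) tree `T` by graph automorphisms, and suppose an
end of `T` — represented by a ray `r` — is fixed by `G` (every `g ∈ G` maps `r` to a ray
which eventually coincides with `r`).  Then the set of elements of `G` fixing some vertex
of `T` is (the underlying set of) a normal subgroup of `G`. -/
theorem stmt_6 {G V : Type*} [Group G] [MulAction G V]
    (T : SimpleGraph V) (htree : T.IsTree)
    (hact : ∀ (g : G) (u v : V), T.Adj u v → T.Adj (g • u) (g • v))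
    (r : ℕ → V) (hray : ∀ n, T.Adj (r n) (r (n + 1))) (hinj : Function.Injective r)
    (hend : ∀ g : G, ∃ k m : ℕ, ∀ n : ℕ, g • r (n + k) = r (n + m)) :
    ∃ N : Subgroup G, N.Normal ∧ (N : Set G) = {g : G | ∃ v : V, g • v = v} := by
  -- Key lemma: an element fixing a vertex fixes a tail of the ray.
  have key : ∀ g : G, (∃ v : V, g • v = v) → ∃ K : ℕ, ∀ n, K ≤ n → g • r n = r n := by
    intro g ⟨v, hv⟩
    obtain ⟨k, m, hkm⟩ := hend g
    -- distances to the ray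
    have hfeq : ∀ n, T.dist v (r (n + m)) = T.dist v (r (n + k)) := by
      intro n
      calc T.dist v (r (n + m)) = T.dist (g • v) (g • r (n + k)) := by rw [hv, hkm]
        _ = T.dist v (r (n + k)) := dist_smul htree hact g v (r (n + k))
    have hlb : ∀ N, N ≤ T.dist v (r 0) + T.dist v (r N) := by
      intro N
      have h1 : T.dist (r 0) (r N) = N := by
        have := dist_ray htree r hray hinj 0 N
        simpa using this
      have h2 := htree.isConnected.dist_triangle (u := r 0) (v := v) (w := r N)
      rw [h1, SimpleGraph.dist_comm (u := r 0) (v := v)] at h2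
      exact h2
    have hmk : m = k := by
      by_contra hne
      rcases Nat.lt_or_ge k m with h | h
      · exact no_growth (T.dist v (r 0)) hlb k m h hfeq
      · exact no_growth (T.dist v (r 0)) hlb m k (by omega) (fun n => (hfeq n).symm)
    subst hmk
    exact ⟨m, fun n hn => by
      have := hkm (n - m)
      rwa [Nat.sub_add_cancel hn] at this⟩
  refine ⟨{ carrier := {g : G | ∃ v : V, g • v = v}
            one_mem' := ⟨r 0, one_smul _ _⟩
            inv_mem' := by
              rintro g ⟨v, hv⟩
              refine ⟨v, ?_⟩
              conv_lhs => rw [← hv]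
              exact inv_smul_smul g v
            mul_mem' := by
              rintro a b ⟨va, hva⟩ ⟨vb, hvb⟩
              obtain ⟨Ka, hKa⟩ := key a ⟨va, hva⟩
              obtain ⟨Kb, hKb⟩ := key b ⟨vb, hvb⟩
              exact ⟨r (max Ka Kb), by
                rw [mul_smul, hKb _ (le_max_right _ _), hKa _ (le_max_left _ _)]⟩ },
        ?_, rfl⟩
  constructor
  rintro n ⟨v, hv⟩ g
  exact ⟨g • v, by rw [mul_smul, mul_smul, inv_smul_smul, hv]⟩
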